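/- The explicit piecewise linear density f is subexponential: f ∈ 𝓛₀ and (∫_0^x f(x−y) f(y) dy)/f(x) → 2 as x → ∞; that is, f ∈ 𝓢₀. -/

import Mathlib

open MeasureTheory Filter Set

noncomputable section

/-- `a_n = 2^(n²)`. -/
def aSeq (n : ℕ) : ℝ := 2 ^ (n ^ 2)

/-- `m_n` : the least positive integer `k` with `k ≥ (√5/√6)·n`. -/
def mIdx (n : ℕ) : ℕ := max 1 ⌈(Real.sqrt 5 / Real.sqrt 6) * (n : ℝ)⌉₊

/-- `b_n = a_n + a_{m_n}·(ln (n+1))²`. -/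
def bSeq (n : ℕ) : ℝ := aSeq n + aSeq (mIdx n) * (Real.log ((n : ℝ) + 1)) ^ 2

/-- `c_n = (a_{n+1} + b_n)/2`. -/
def cSeq (n : ℕ) : ℝ := (aSeq (n + 1) + bSeq n) / 2

/-- `f` is affine (the linear interpolation of its endpoint values) on `[p, q]`. -/
def AffineOnIcc (f : ℝ → ℝ) (p q : ℝ) : Prop :=
  ∀ x ∈ Set.Icc p q, f x = f p + (x - p) / (q - p) * (f q - f p)

/-- The explicit continuous piecewise linear construction `f₀ : [0,∞) → (0,∞)`
with `f₀(0) = 1`, `f₀(a_n) = 2 a_n⁻³`, `f₀(b_n) = 2 a_n⁻³ / ln(n+1)`,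
`f₀(c_n) = 2 a_n⁻³`, affine on `[0,a₁]`, `[a_n,b_n]`, `[b_n,c_n]`, `[c_n,a_{n+1}]`. -/
def PWConstruction (f₀ : ℝ → ℝ) : Prop :=
  ContinuousOn f₀ (Set.Ici 0) ∧
  (∀ x : ℝ, 0 ≤ x → 0 < f₀ x) ∧
  f₀ 0 = 1 ∧
  (∀ n : ℕ, 1 ≤ n →
    f₀ (aSeq n) = 2 / (aSeq n) ^ 3 ∧
    f₀ (bSeq n) = 2 / (aSeq n) ^ 3 / Real.log ((n : ℝ) + 1) ∧
    f₀ (cSeq n) = 2 / (aSeq n) ^ 3) ∧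
  AffineOnIcc f₀ 0 (aSeq 1) ∧
  (∀ n : ℕ, 1 ≤ n →
    AffineOnIcc f₀ (aSeq n) (bSeq n) ∧
    AffineOnIcc f₀ (bSeq n) (cSeq n) ∧
    AffineOnIcc f₀ (cSeq n) (aSeq (n + 1)))

/-- The normalized extension `f = f₀ / ∫₀^∞ f₀(y) dy`, extended by `0` on `(-∞,0)`. -/
def normExt (f₀ : ℝ → ℝ) : ℝ → ℝ :=
  fun x => if x < 0 then 0 else f₀ x / ∫ y in Set.Ici (0:ℝ), f₀ y

/-- The long-tailed density class `𝓛₀`. -/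
def LongTailedDensity (f : ℝ → ℝ) : Prop :=
  (∀ᶠ x in atTop, 0 < f x) ∧
  ∀ t : ℝ, Tendsto (fun x => f (x + t) / f x) atTop (nhds 1)

/-- The subexponential density class `𝓢₀`. -/
def SubexpDensity (f : ℝ → ℝ) : Prop :=
  LongTailedDensity f ∧
  Tendsto (fun x => (∫ y in (0:ℝ)..x, f (x - y) * f y) / f x) atTop (nhds 2)

namespace PWProof

lemma aSeq_pos (n : ℕ) : 0 < aSeq n := by unfold aSeq; positivity

lemma one_le_aSeq (n : ℕ) : 1 ≤ aSeq n := one_le_pow₀ one_le_two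

lemma aSeq_mono : Monotone aSeq := by
  intro m n h
  exact pow_le_pow_right₀ one_le_two (Nat.pow_le_pow_left h 2)

lemma aSeq_strictMono : StrictMono aSeq := by
  intro m n h
  exact pow_lt_pow_right₀ one_lt_two (Nat.pow_lt_pow_left h (by norm_num))

lemma two_mul_aSeq_le (n : ℕ) : 2 * aSeq n ≤ aSeq (n + 1) := by
  unfold aSeq
  rw [← pow_succ']
  apply pow_le_pow_right₀ one_le_two
  have : (n+1)^2 = n^2+2*n+1 := by ring
  omega

lemma nat_le_aSeq (n : ℕ) : (n : ℝ) ≤ aSeq n := by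
  calc (n : ℝ) ≤ 2 ^ n := by
        exact_mod_cast (Nat.lt_two_pow_self (n := n)).le
    _ ≤ aSeq n := pow_le_pow_right₀ one_le_two (by nlinarith)

lemma one_le_mIdx (n : ℕ) : 1 ≤ mIdx n := le_max_left _ _

lemma sqrt_ratio_le_one : Real.sqrt 5 / Real.sqrt 6 ≤ 1 := by
  rw [div_le_one (by positivity)]
  exact Real.sqrt_le_sqrt (by norm_num)

lemma half_le_sqrt_ratio : (1:ℝ)/2 ≤ Real.sqrt 5 / Real.sqrt 6 := by
  rw [le_div_iff₀ (by positivity)]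
  have h6 : Real.sqrt 6 ≤ 3 := by
    nlinarith [Real.sq_sqrt (by norm_num : (0:ℝ) ≤ 6), Real.sqrt_nonneg 6]
  have h5 : (2:ℝ) ≤ Real.sqrt 5 := by
    nlinarith [Real.sq_sqrt (by norm_num : (0:ℝ) ≤ 5), Real.sqrt_nonneg 5]
  linarith

lemma mIdx_le {n : ℕ} (hn : 1 ≤ n) : mIdx n ≤ n := by
  apply max_le hn
  rw [Nat.ceil_le]
  calc Real.sqrt 5 / Real.sqrt 6 * n ≤ 1 * n := by
        apply mul_le_mul_of_nonneg_right sqrt_ratio_le_one (by positivity)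
    _ = n := one_mul _

lemma half_le_mIdx (n : ℕ) : (n : ℝ) / 2 ≤ mIdx n := by
  calc (n : ℝ)/2 = 1/2 * n := by ring
    _ ≤ Real.sqrt 5 / Real.sqrt 6 * n := by
        apply mul_le_mul_of_nonneg_right half_le_sqrt_ratio (by positivity)
    _ ≤ ⌈Real.sqrt 5 / Real.sqrt 6 * (n:ℝ)⌉₊ := Nat.le_ceil _
    _ ≤ mIdx n := by exact_mod_cast Nat.cast_le.mpr (le_max_right _ _)

lemma div2_le_mIdx (n : ℕ) : n / 2 ≤ mIdx n := by
  have := half_le_mIdx n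
  have : (n : ℝ) ≤ 2 * mIdx n := by linarith
  have : n ≤ 2 * mIdx n := by exact_mod_cast this
  omega

lemma log_pos' {n : ℕ} (hn : 1 ≤ n) : 0 < Real.log ((n:ℝ) + 1) := by
  apply Real.log_pos
  have : (1:ℝ) ≤ n := by exact_mod_cast hn
  linarith

lemma log_le_nat (n : ℕ) : Real.log ((n:ℝ) + 1) ≤ n := by
  have := Real.log_le_sub_one_of_pos (x := (n:ℝ)+1) (by positivity)
  linarith

lemma half_le_log {n : ℕ} (hn : 1 ≤ n) : (1:ℝ)/2 ≤ Real.log ((n:ℝ) + 1) := by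
  have h2 : Real.log 2 ≤ Real.log ((n:ℝ)+1) := by
    apply Real.log_le_log (by norm_num)
    have : (1:ℝ) ≤ n := by exact_mod_cast hn
    linarith
  have := Real.log_two_gt_d9
  linarith

lemma one_le_log2 {n : ℕ} (hn : 2 ≤ n) : 1 ≤ Real.log ((n:ℝ) + 1) := by
  have h3 : Real.log 3 ≤ Real.log ((n:ℝ)+1) := by
    apply Real.log_le_log (by norm_num)
    have : (2:ℝ) ≤ n := by exact_mod_cast hn
    linarith
  have h1 : (1:ℝ) ≤ Real.log 3 := by
    rw [Real.le_log_iff_exp_le (by norm_num)]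
    have := Real.exp_one_lt_d9
    linarith
  linarith

lemma aSeq_mIdx_le {n : ℕ} (hn : 1 ≤ n) : aSeq (mIdx n) ≤ aSeq n :=
  aSeq_mono (mIdx_le hn)

lemma aSeq_lt_bSeq {n : ℕ} (hn : 1 ≤ n) : aSeq n < bSeq n := by
  have h1 := aSeq_pos (mIdx n)
  have h2 := log_pos' hn
  unfold bSeq
  have h3 : 0 < aSeq (mIdx n) * (Real.log ((n:ℝ)+1))^2 := mul_pos h1 (pow_pos h2 2)
  linarith

lemma bSeq_le_half {n : ℕ} (hn : 1 ≤ n) : bSeq n ≤ aSeq (n+1) / 2 := by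
  have h1 : bSeq n ≤ aSeq n * (1 + (n:ℝ)^2) := by
    unfold bSeq
    have hm := aSeq_mIdx_le hn
    have hl : (Real.log ((n:ℝ)+1))^2 ≤ (n:ℝ)^2 := by
      apply sq_le_sq'
      · have := log_pos' hn; have : (0:ℝ) ≤ n := by positivity
        nlinarith [log_pos' hn]
      · exact log_le_nat n
    have h0 := (aSeq_pos n).le
    have h0' := (aSeq_pos (mIdx n)).le
    have : aSeq (mIdx n) * (Real.log ((n:ℝ)+1))^2 ≤ aSeq n * (n:ℝ)^2 := by
      apply mul_le_mul hm hl (by positivity) h0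
    nlinarith
  have h2 : (1 + (n:ℝ)^2) ≤ 2^(2*n) := by
    have : n^2 < 2^(2*n) := by
      calc n^2 < (2^n)^2 := Nat.pow_lt_pow_left (Nat.lt_two_pow_self (n := n)) (by norm_num)
        _ = 2^(2*n) := by rw [← pow_mul, Nat.mul_comm]
    have h' : (1 + n^2 : ℕ) ≤ 2^(2*n) := Nat.one_add_le_iff.mpr this
    exact_mod_cast h'
  have h3 : aSeq n * 2^(2*n) = aSeq (n+1) / 2 := by
    unfold aSeq
    rw [← pow_add]
    rw [eq_div_iff (by norm_num), ← pow_succ]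
    congr 1
    ring
  calc bSeq n ≤ aSeq n * (1 + (n:ℝ)^2) := h1
    _ ≤ aSeq n * 2^(2*n) := by
        apply mul_le_mul_of_nonneg_left h2 (aSeq_pos n).le
    _ = aSeq (n+1)/2 := h3

lemma bSeq_lt_aSeq_succ {n : ℕ} (hn : 1 ≤ n) : bSeq n < aSeq (n+1) := by
  have := bSeq_le_half hn
  have := aSeq_pos (n+1)
  linarith

lemma bSeq_lt_cSeq {n : ℕ} (hn : 1 ≤ n) : bSeq n < cSeq n := by
  have := bSeq_lt_aSeq_succ hn
  unfold cSeq; linarith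

lemma cSeq_lt_aSeq_succ {n : ℕ} (hn : 1 ≤ n) : cSeq n < aSeq (n+1) := by
  have := bSeq_lt_aSeq_succ hn
  unfold cSeq; linarith

lemma quarter_le_cb {n : ℕ} (hn : 1 ≤ n) : aSeq (n+1) / 4 ≤ cSeq n - bSeq n := by
  have := bSeq_le_half hn
  unfold cSeq; linarith

lemma quarter_le_ac {n : ℕ} (hn : 1 ≤ n) : aSeq (n+1) / 4 ≤ aSeq (n+1) - cSeq n := by
  have := bSeq_le_half hn
  have h := aSeq_lt_bSeq hn
  have := aSeq_pos n
  unfold cSeq; linarith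

lemma exists_block_aux : ∀ N : ℕ, ∀ x : ℝ, x ≤ aSeq (N+1) → aSeq 1 ≤ x →
    ∃ n, 1 ≤ n ∧ aSeq n ≤ x ∧ x ≤ aSeq (n+1) := by
  intro N
  induction N with
  | zero =>
    intro x h1 h2
    exact ⟨1, le_refl _, h2, le_trans (by simpa using h1) (aSeq_mono (by omega))⟩
  | succ N ih =>
    intro x h1 h2
    by_cases h : x ≤ aSeq (N+1)
    · exact ih x h h2
    · exact ⟨N+1, by omega, (not_le.mp h).le, h1⟩

lemma exists_block {x : ℝ} (hx : aSeq 1 ≤ x) :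
    ∃ n, 1 ≤ n ∧ aSeq n ≤ x ∧ x ≤ aSeq (n+1) := by
  obtain ⟨N, hN⟩ := exists_nat_gt x
  have hxa : x ≤ aSeq (N+1) := le_trans hN.le ((nat_le_aSeq N).trans (aSeq_mono (by omega)))
  exact exists_block_aux N x hxa hx


/-- value scale -/
def vS (n : ℕ) : ℝ := 2 / (aSeq n)^3
/-- log scale -/
def LS (n : ℕ) : ℝ := Real.log ((n:ℝ) + 1)
/-- per-block Lipschitz constant -/
def sS (n : ℕ) : ℝ := 12 * vS n / aSeq (mIdx n)
/-- tri-block Lipschitz constant -/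
def SS (k : ℕ) : ℝ := sS k + sS (k+1) + sS (k+2)
/-- tri-block relative oscillation constant -/
def KS (k : ℕ) : ℝ := SS k * LS (k+2) / vS (k+2)

lemma vS_pos (n : ℕ) : 0 < vS n := by
  have := aSeq_pos n; unfold vS; positivity

lemma vS_anti {m n : ℕ} (h : m ≤ n) : vS n ≤ vS m := by
  unfold vS
  exact div_le_div_of_nonneg_left (by norm_num) (pow_pos (aSeq_pos m) 3)
    (pow_le_pow_left₀ (aSeq_pos m).le (aSeq_mono h) 3)

lemma sS_pos (n : ℕ) : 0 < sS n := by
  have h1 := vS_pos n; have h2 := aSeq_pos (mIdx n); unfold sS; positivity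

lemma SS_pos (k : ℕ) : 0 < SS k := by
  have := sS_pos k; have := sS_pos (k+1); have := sS_pos (k+2); unfold SS; linarith

lemma KS_pos (k : ℕ) : 0 < KS k := by
  have h1 := SS_pos k
  have h2 : 0 < LS (k+2) := log_pos' (by omega)
  have h3 := vS_pos (k+2)
  unfold KS; positivity

section F

variable {f₀ : ℝ → ℝ}

lemma affine_between {p q : ℝ} (h : AffineOnIcc f₀ p q) (hpq : p < q)
    {x : ℝ} (hx : x ∈ Set.Icc p q) :
    min (f₀ p) (f₀ q) ≤ f₀ x ∧ f₀ x ≤ max (f₀ p) (f₀ q) := by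
  have hfx := h x hx
  have hθ0 : 0 ≤ (x - p)/(q - p) := div_nonneg (by linarith [hx.1]) (by linarith)
  have hθ1 : (x - p)/(q - p) ≤ 1 := by
    rw [div_le_one (by linarith)]; linarith [hx.2]
  constructor
  · rcases le_total (f₀ p) (f₀ q) with hc | hc
    · rw [min_eq_left hc]; nlinarith
    · rw [min_eq_right hc]; nlinarith
  · rcases le_total (f₀ p) (f₀ q) with hc | hc
    · rw [max_eq_right hc]; nlinarith
    · rw [max_eq_left hc]; nlinarith

lemma affine_lip {p q K : ℝ} (h : AffineOnIcc f₀ p q) (hpq : p < q)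
    (hK : |f₀ q - f₀ p| ≤ K * (q - p)) :
    ∀ x ∈ Set.Icc p q, ∀ y ∈ Set.Icc p q, |f₀ x - f₀ y| ≤ K * |x - y| := by
  intro x hx y hy
  have hfx := h x hx
  have hfy := h y hy
  have hqp : 0 < q - p := by linarith
  have : f₀ x - f₀ y = (x - y) * ((f₀ q - f₀ p)/(q-p)) := by
    rw [hfx, hfy]; field_simp; ring
  rw [this, abs_mul, abs_div, abs_of_pos hqp]
  calc |x - y| * (|f₀ q - f₀ p| / (q-p)) ≤ |x - y| * K := by
        apply mul_le_mul_of_nonneg_left _ (abs_nonneg _)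
        rw [div_le_iff₀ hqp]; linarith
    _ = K * |x - y| := mul_comm _ _

lemma lip_glue {f : ℝ → ℝ} {p q r K : ℝ} (hpq : p ≤ q) (hqr : q ≤ r)
    (h1 : ∀ x ∈ Set.Icc p q, ∀ y ∈ Set.Icc p q, |f x - f y| ≤ K * |x - y|)
    (h2 : ∀ x ∈ Set.Icc q r, ∀ y ∈ Set.Icc q r, |f x - f y| ≤ K * |x - y|) :
    ∀ x ∈ Set.Icc p r, ∀ y ∈ Set.Icc p r, |f x - f y| ≤ K * |x - y| := by
  have key : ∀ x ∈ Set.Icc p r, ∀ y ∈ Set.Icc p r, x ≤ y → |f x - f y| ≤ K * |x - y| := by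
    intro x hx y hy hxy
    by_cases hyq : y ≤ q
    · exact h1 x ⟨hx.1, hyq.trans' hxy⟩ y ⟨hy.1, hyq⟩
    · by_cases hxq : q ≤ x
      · exact h2 x ⟨hxq, hx.2⟩ y ⟨hxq.trans hxy, hy.2⟩
      · push_neg at hyq hxq
        have e1 := h1 x ⟨hx.1, hxq.le⟩ q ⟨hpq, le_refl q⟩
        have e2 := h2 q ⟨le_refl q, hqr⟩ y ⟨hyq.le, hy.2⟩
        have : |f x - f y| ≤ |f x - f q| + |f q - f y| := abs_sub_le _ _ _
        rw [abs_of_nonpos (by linarith : x - q ≤ 0)] at e1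
        rw [abs_of_nonpos (by linarith : q - y ≤ 0)] at e2
        rw [abs_of_nonpos (by linarith : x - y ≤ 0)]
        linarith
  intro x hx y hy
  rcases le_total x y with h | h
  · exact key x hx y hy h
  · rw [abs_sub_comm, abs_sub_comm x y]; exact key y hy x hx h

lemma f_vals (hf : PWConstruction f₀) {n : ℕ} (hn : 1 ≤ n) :
    f₀ (aSeq n) = vS n ∧ f₀ (bSeq n) = vS n / LS n ∧ f₀ (cSeq n) = vS n :=
  hf.2.2.2.1 n hn

/-- Block-wide bounds. -/
lemma block_bounds (hf : PWConstruction f₀) {n : ℕ} (hn : 1 ≤ n) {x : ℝ}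
    (hx : x ∈ Set.Icc (aSeq n) (aSeq (n+1))) :
    vS (n+1) / LS (n+1) ≤ f₀ x ∧ f₀ x ≤ 3 * vS n := by
  obtain ⟨fa, fb, fc⟩ := f_vals hf hn
  obtain ⟨fa', _, _⟩ := f_vals hf (n := n+1) (by omega)
  obtain ⟨g1, g2, g3⟩ := hf.2.2.2.2.2 n hn
  have hvn := vS_pos n
  have hvn1 := vS_pos (n+1)
  have hv1 : vS (n+1) ≤ vS n := vS_anti (by omega)
  have hL : (1:ℝ)/2 ≤ LS n := half_le_log hn
  have hL' : (1:ℝ) ≤ LS (n+1) := one_le_log2 (by omega)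
  have hLL : LS n ≤ LS (n+1) := by
    unfold LS
    apply Real.log_le_log (by positivity)
    push_cast; linarith
  have hab := aSeq_lt_bSeq hn
  have hbc := bSeq_lt_cSeq hn
  have hca := cSeq_lt_aSeq_succ hn
  -- lower bounds for the endpoint values
  have low1 : vS (n+1) / LS (n+1) ≤ vS n := by
    calc vS (n+1)/LS (n+1) ≤ vS (n+1)/1 := by
          apply div_le_div_of_nonneg_left hvn1.le (by norm_num) hL'
      _ = vS (n+1) := div_one _
      _ ≤ vS n := hv1
  have low2 : vS (n+1) / LS (n+1) ≤ vS n / LS n := by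
    apply div_le_div₀ hvn.le hv1 (by linarith) hLL
  have low3 : vS (n+1) / LS (n+1) ≤ vS (n+1) := by
    calc vS (n+1)/LS (n+1) ≤ vS (n+1)/1 := by
          apply div_le_div_of_nonneg_left hvn1.le (by norm_num) hL'
      _ = vS (n+1) := div_one _
  have up2 : vS n / LS n ≤ 3 * vS n := by
    rw [div_le_iff₀ (by linarith)]
    nlinarith
  rcases le_total x (bSeq n) with h | h
  · have := affine_between (f₀ := f₀) g1 hab ⟨hx.1, h⟩
    rw [fa, fb] at this
    constructor
    · calc vS (n+1)/LS (n+1) ≤ min (vS n) (vS n / LS n) := le_min low1 low2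
        _ ≤ f₀ x := this.1
    · calc f₀ x ≤ max (vS n) (vS n / LS n) := this.2
        _ ≤ 3 * vS n := max_le (by linarith) up2
  · rcases le_total x (cSeq n) with h' | h'
    · have := affine_between (f₀ := f₀) g2 hbc ⟨h, h'⟩
      rw [fb, fc] at this
      constructor
      · calc vS (n+1)/LS (n+1) ≤ min (vS n / LS n) (vS n) := le_min low2 low1
          _ ≤ f₀ x := this.1
      · calc f₀ x ≤ max (vS n / LS n) (vS n) := this.2
          _ ≤ 3 * vS n := max_le up2 (by linarith)
    · have := affine_between (f₀ := f₀) g3 hca ⟨h', hx.2⟩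
      rw [fc, fa'] at this
      constructor
      · calc vS (n+1)/LS (n+1) ≤ min (vS n) (vS (n+1)) := le_min low1 low3
          _ ≤ f₀ x := this.1
      · calc f₀ x ≤ max (vS n) (vS (n+1)) := this.2
          _ ≤ 3 * vS n := max_le (by linarith) (by linarith)

/-- Per-block Lipschitz bound with constant `sS n`. -/
lemma block_lip (hf : PWConstruction f₀) {n : ℕ} (hn : 1 ≤ n) :
    ∀ x ∈ Set.Icc (aSeq n) (aSeq (n+1)), ∀ y ∈ Set.Icc (aSeq n) (aSeq (n+1)),
      |f₀ x - f₀ y| ≤ sS n * |x - y| := by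
  obtain ⟨fa, fb, fc⟩ := f_vals hf hn
  obtain ⟨fa', _, _⟩ := f_vals hf (n := n+1) (by omega)
  obtain ⟨g1, g2, g3⟩ := hf.2.2.2.2.2 n hn
  have hvn := vS_pos n
  have hvn1 := vS_pos (n+1)
  have hv1 : vS (n+1) ≤ vS n := vS_anti (by omega)
  have hL : (1:ℝ)/2 ≤ LS n := half_le_log hn
  have hLpos : 0 < LS n := by linarith
  have ham := aSeq_pos (mIdx n)
  have ham' : aSeq (mIdx n) ≤ aSeq (n+1) := aSeq_mono ((mIdx_le hn).trans (by omega))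
  have hab := aSeq_lt_bSeq hn
  have hbc := bSeq_lt_cSeq hn
  have hca := cSeq_lt_aSeq_succ hn
  have hΔ : |vS n / LS n - vS n| ≤ 3 * vS n := by
    rw [abs_le]
    constructor
    · have : vS n / LS n ≥ 0 := by positivity
      linarith
    · have : vS n / LS n ≤ 2 * vS n := by
        rw [div_le_iff₀ hLpos]; nlinarith
      linarith
  -- piece 1
  have lip1 : ∀ x ∈ Set.Icc (aSeq n) (bSeq n), ∀ y ∈ Set.Icc (aSeq n) (bSeq n),
      |f₀ x - f₀ y| ≤ sS n * |x - y| := by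
    apply affine_lip g1 hab
    rw [fa, fb]
    have hlen : bSeq n - aSeq n = aSeq (mIdx n) * (LS n)^2 := by
      unfold bSeq LS; ring
    rw [hlen]
    have : sS n * (aSeq (mIdx n) * (LS n)^2) = 12 * vS n * (LS n)^2 := by
      unfold sS; field_simp
    rw [this]
    have hsq : (1:ℝ)/4 ≤ (LS n)^2 := by nlinarith
    calc |vS n / LS n - vS n| ≤ 3 * vS n := hΔ
      _ ≤ 12 * vS n * (LS n)^2 := by nlinarith
  -- piece 2
  have lip2 : ∀ x ∈ Set.Icc (bSeq n) (cSeq n), ∀ y ∈ Set.Icc (bSeq n) (cSeq n),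
      |f₀ x - f₀ y| ≤ sS n * |x - y| := by
    apply affine_lip g2 hbc
    rw [fb, fc]
    have hq := quarter_le_cb hn
    have hsn := sS_pos n
    calc |vS n - vS n / LS n| ≤ 3 * vS n := by rw [abs_sub_comm]; exact hΔ
      _ ≤ sS n * (aSeq (n+1)/4) := by
          unfold sS
          rw [div_mul_eq_mul_div, le_div_iff₀ ham]
          nlinarith [mul_le_mul_of_nonneg_left ham' hvn.le]
      _ ≤ sS n * (cSeq n - bSeq n) := by
          apply mul_le_mul_of_nonneg_left hq hsn.le
  -- piece 3
  have lip3 : ∀ x ∈ Set.Icc (cSeq n) (aSeq (n+1)), ∀ y ∈ Set.Icc (cSeq n) (aSeq (n+1)),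
      |f₀ x - f₀ y| ≤ sS n * |x - y| := by
    apply affine_lip g3 hca
    rw [fc, fa']
    have hq := quarter_le_ac hn
    have hsn := sS_pos n
    calc |vS (n+1) - vS n| ≤ 3 * vS n := by
          rw [abs_of_nonpos (by linarith)]; linarith
      _ ≤ sS n * (aSeq (n+1)/4) := by
          unfold sS
          rw [div_mul_eq_mul_div, le_div_iff₀ ham]
          nlinarith [mul_le_mul_of_nonneg_left ham' hvn.le]
      _ ≤ sS n * (aSeq (n+1) - cSeq n) := by
          apply mul_le_mul_of_nonneg_left hq hsn.le
  have lip12 := lip_glue hab.le hbc.le lip1 lip2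
  exact lip_glue (hab.le.trans hbc.le) hca.le lip12 lip3


lemma lip_weaken {s : Set ℝ} {K K' : ℝ} (hKK' : K ≤ K')
    (h : ∀ x ∈ s, ∀ y ∈ s, |f₀ x - f₀ y| ≤ K * |x - y|) :
    ∀ x ∈ s, ∀ y ∈ s, |f₀ x - f₀ y| ≤ K' * |x - y| := by
  intro x hx y hy
  exact le_trans (h x hx y hy) (mul_le_mul_of_nonneg_right hKK' (abs_nonneg _))

lemma tri_lip (hf : PWConstruction f₀) {k : ℕ} (hk : 1 ≤ k) :
    ∀ x ∈ Set.Icc (aSeq k) (aSeq (k+3)), ∀ y ∈ Set.Icc (aSeq k) (aSeq (k+3)),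
      |f₀ x - f₀ y| ≤ SS k * |x - y| := by
  have s1 := sS_pos k
  have s2 := sS_pos (k+1)
  have s3 := sS_pos (k+2)
  have w1 : sS k ≤ SS k := by unfold SS; linarith
  have w2 : sS (k+1) ≤ SS k := by unfold SS; linarith
  have w3 : sS (k+2) ≤ SS k := by unfold SS; linarith
  have l1 := lip_weaken w1 (block_lip hf hk)
  have l2 := lip_weaken w2 (block_lip hf (n := k+1) (by omega))
  have l3 := lip_weaken w3 (block_lip hf (n := k+2) (by omega))
  have h01 : aSeq k ≤ aSeq (k+1) := aSeq_mono (by omega)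
  have h12 : aSeq (k+1) ≤ aSeq (k+2) := aSeq_mono (by omega)
  have h23 : aSeq (k+2) ≤ aSeq (k+3) := aSeq_mono (by omega)
  have l12 := lip_glue h01 h12 l1 l2
  have : (k+1)+1 = k+2 := rfl
  have l123 := lip_glue (h01.trans h12) h23 l12 (by rw [show k+2+1 = k+3 from rfl] at l3; exact l3)
  exact l123

lemma fx_lower (hf : PWConstruction f₀) {k : ℕ} {x : ℝ}
    (hx : x ∈ Set.Icc (aSeq (k+1)) (aSeq (k+2))) :
    vS (k+2) / LS (k+2) ≤ f₀ x := by
  have := (block_bounds hf (n := k+1) (by omega) (by rw [show k+1+1 = k+2 from rfl]; exact hx)).1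
  rwa [show k+1+1 = k+2 from rfl] at this

lemma ratio_bound (hf : PWConstruction f₀) {k : ℕ} (hk : 1 ≤ k) {x z : ℝ}
    (hx : x ∈ Set.Icc (aSeq (k+1)) (aSeq (k+2)))
    (hz : z ∈ Set.Icc (aSeq k) (aSeq (k+3))) :
    |f₀ z / f₀ x - 1| ≤ KS k * |x - z| := by
  have hv := vS_pos (k+2)
  have hL : 0 < LS (k+2) := log_pos' (by omega)
  have hlow := fx_lower hf hx
  have hfx : 0 < f₀ x := lt_of_lt_of_le (by positivity) hlow
  have hx' : x ∈ Set.Icc (aSeq k) (aSeq (k+3)) :=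
    ⟨le_trans (aSeq_mono (by omega)) hx.1, le_trans hx.2 (aSeq_mono (by omega))⟩
  have htri := tri_lip hf hk x hx' z hz
  have key : SS k ≤ KS k * f₀ x := by
    have h1 : KS k * (vS (k+2) / LS (k+2)) = SS k := by
      unfold KS; field_simp
    have h2 : KS k * (vS (k+2)/LS (k+2)) ≤ KS k * f₀ x :=
      mul_le_mul_of_nonneg_left hlow (KS_pos k).le
    linarith
  rw [show f₀ z / f₀ x - 1 = (f₀ z - f₀ x)/f₀ x by field_simp]
  rw [abs_div, abs_of_pos hfx, div_le_iff₀ hfx]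
  calc |f₀ z - f₀ x| ≤ SS k * |x - z| := by rw [abs_sub_comm] at htri; exact htri
    _ ≤ (KS k * f₀ x) * |x - z| := mul_le_mul_of_nonneg_right key (abs_nonneg _)
    _ = KS k * |x - z| * f₀ x := by ring

end F

lemma aSeq_mIdx_ge (j : ℕ) : (2:ℝ)^((j/2)^2) ≤ aSeq (mIdx j) := by
  unfold aSeq
  apply pow_le_pow_right₀ one_le_two
  exact Nat.pow_le_pow_left (div2_le_mIdx j) 2

lemma sS_le {k j : ℕ} (hkj : k ≤ j) : sS j ≤ 24 / ((aSeq k)^3 * 2^((k/2)^2)) := by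
  have hak := aSeq_pos k
  have haj := aSeq_pos j
  have ham := aSeq_pos (mIdx j)
  have h1 : (aSeq k)^3 ≤ (aSeq j)^3 := pow_le_pow_left₀ hak.le (aSeq_mono hkj) 3
  have h2 : (2:ℝ)^((k/2)^2) ≤ aSeq (mIdx j) :=
    le_trans (pow_le_pow_right₀ one_le_two (Nat.pow_le_pow_left (Nat.div_le_div_right hkj) 2))
      (aSeq_mIdx_ge j)
  have e : sS j = 24/((aSeq j)^3 * aSeq (mIdx j)) := by
    unfold sS vS; field_simp; ring
  rw [e]
  apply div_le_div_of_nonneg_left (by norm_num) (by positivity)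
  apply mul_le_mul h1 h2 (by positivity) (by positivity)

lemma KS_le_geom {k : ℕ} (hk : 63 ≤ k) : KS k ≤ 36 * (1/2)^k := by
  have hak := aSeq_pos k
  have hak2 := aSeq_pos (k+2)
  have hL : 0 < LS (k+2) := log_pos' (by omega)
  have hv := vS_pos (k+2)
  have hSS : SS k ≤ 72 / ((aSeq k)^3 * 2^((k/2)^2)) := by
    have g1 := sS_le (le_refl k)
    have g2 := sS_le (show k ≤ k+1 by omega)
    have g3 := sS_le (show k ≤ k+2 by omega)
    unfold SS
    have : (24:ℝ)/((aSeq k)^3 * 2^((k/2)^2)) * 3 = 72/((aSeq k)^3 * 2^((k/2)^2)) := by ring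
    linarith
  -- KS k = SS k * LS (k+2) / vS (k+2)
  have hKS : KS k ≤ 72 / ((aSeq k)^3 * 2^((k/2)^2)) * LS (k+2) * ((aSeq (k+2))^3 / 2) := by
    unfold KS
    rw [div_eq_mul_inv, show (vS (k+2))⁻¹ = (aSeq (k+2))^3/2 by unfold vS; field_simp]
    apply mul_le_mul_of_nonneg_right _ (by positivity)
    exact mul_le_mul_of_nonneg_right hSS hL.le
  -- aSeq (k+2)^3 = aSeq k ^3 * 2^(12k+12)
  have hsplit : (aSeq (k+2))^3 = (aSeq k)^3 * 2^(12*k+12) := by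
    unfold aSeq
    rw [← pow_mul, ← pow_mul, ← pow_add]
    congr 1
    ring
  have hLle : LS (k+2) ≤ (2:ℝ)^(k+2) := by
    unfold LS
    calc Real.log (((k+2:ℕ):ℝ) + 1) ≤ ((k+2:ℕ):ℝ) := log_le_nat (k+2)
      _ ≤ (2:ℝ)^(k+2) := by exact_mod_cast (Nat.lt_two_pow_self (n := k+2)).le
  have hP : (0:ℝ) < 2^((k/2)^2) := by positivity
  have e1 : 72/((aSeq k)^3 * 2^((k/2)^2)) * LS (k+2) * ((aSeq (k+2))^3/2)
      = 36 * LS (k+2) * 2^(12*k+12) / 2^((k/2)^2) := by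
    rw [hsplit]; field_simp; ring
  have e2 : 36 * LS (k+2) * 2^(12*k+12) / 2^((k/2)^2)
      ≤ 36 * (2:ℝ)^(k+2) * 2^(12*k+12) / 2^((k/2)^2) := by
    gcongr
  have eexp : (k+2)+(12*k+12) = 13*k+14 := by ring
  have e3 : (36:ℝ) * 2^(k+2) * 2^(12*k+12) = 36 * 2^(13*k+14) := by
    rw [mul_assoc, ← pow_add, eexp]
  have hexp : 14*k+14 ≤ (k/2)^2 := by
    have h2p : k ≤ 2*(k/2)+1 := by omega
    have hp : 31 ≤ k/2 := by omega
    have hsq : 31*(k/2) ≤ (k/2)*(k/2) := Nat.mul_le_mul_right _ hp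
    rw [pow_two]
    nlinarith [hsq, h2p, hp]
  have key : (2:ℝ)^(13*k+14) * 2^k ≤ 2^((k/2)^2) := by
    rw [← pow_add]
    apply pow_le_pow_right₀ one_le_two
    calc 13*k+14+k = 14*k+14 := by ring
      _ ≤ (k/2)^2 := hexp
  have e4 : (2:ℝ)^(13*k+14)/2^((k/2)^2) ≤ (1/2)^k := by
    rw [div_le_iff₀ hP, one_div, inv_pow, inv_mul_eq_div,
      le_div_iff₀ (by positivity : (0:ℝ) < 2^k)]
    exact key
  calc KS k ≤ 72/((aSeq k)^3 * 2^((k/2)^2)) * LS (k+2) * ((aSeq (k+2))^3/2) := hKS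
    _ = 36 * LS (k+2) * 2^(12*k+12) / 2^((k/2)^2) := e1
    _ ≤ 36 * (2:ℝ)^(k+2) * 2^(12*k+12) / 2^((k/2)^2) := e2
    _ = 36 * 2^(13*k+14) / 2^((k/2)^2) := by rw [e3]
    _ = 36 * ((2:ℝ)^(13*k+14) / 2^((k/2)^2)) := by ring
    _ ≤ 36 * (1/2)^k := by
        apply mul_le_mul_of_nonneg_left e4 (by norm_num)


section Integrab

variable {g : ℝ → ℝ}

lemma block_integral_bound (hg : ContinuousOn g (Set.Ici 0)) {p q Cb : ℝ}
    (h0p : 0 ≤ p) (hpq : p ≤ q) (hC : ∀ x ∈ Set.Icc p q, |g x| ≤ Cb) :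
    ∫ x in p..q, |g x| ≤ Cb * (q - p) := by
  have hsub : Set.uIcc p q ⊆ Set.Ici 0 := by
    rw [Set.uIcc_of_le hpq]
    intro x hx; exact le_trans h0p hx.1
  have hint : IntervalIntegrable (fun x => |g x|) volume p q :=
    ((hg.mono hsub).abs).intervalIntegrable
  have hint2 : IntervalIntegrable (fun _ : ℝ => Cb) volume p q :=
    intervalIntegrable_const
  calc ∫ x in p..q, |g x| ≤ ∫ _x in p..q, Cb := by
        apply intervalIntegral.integral_mono_on hpq hint hint2
        intro x hx
        exact hC x hx
    _ = Cb * (q - p) := by rw [intervalIntegral.integral_const, smul_eq_mul, mul_comm]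

lemma integrableOn_of_blockBound (hg : ContinuousOn g (Set.Ici 0))
    {C : ℕ → ℝ} {D : ℝ} (hD : 0 ≤ D)
    (h00 : 0 ≤ C 0)
    (h0 : ∀ x ∈ Set.Icc (0:ℝ) (aSeq 1), |g x| ≤ C 0)
    (hb : ∀ n, 1 ≤ n → ∀ x ∈ Set.Icc (aSeq n) (aSeq (n+1)), |g x| ≤ C n)
    (hgeo : ∀ n, 1 ≤ n → C n * (aSeq (n+1) - aSeq n) ≤ D * (1/2)^n) :
    IntegrableOn g (Set.Ici 0) := by
  have habs : ContinuousOn (fun x => |g x|) (Set.Ici 0) := hg.abs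
  have hii : ∀ u v : ℝ, 0 ≤ u → u ≤ v → IntervalIntegrable (fun x => |g x|) volume u v := by
    intro u v hu huv
    apply (habs.mono _).intervalIntegrable
    rw [Set.uIcc_of_le huv]
    intro x hx; exact le_trans hu hx.1
  -- partial integral bound by induction
  have key : ∀ j : ℕ, ∫ x in (0:ℝ)..(aSeq (j+1)), |g x| ≤ C 0 * aSeq 1 + D * (1 - (1/2)^j) := by
    intro j
    induction j with
    | zero =>
      simp only [pow_zero, sub_self, mul_zero, add_zero]
      have := block_integral_bound hg (le_refl 0) (by linarith [aSeq_pos 1] : (0:ℝ) ≤ aSeq 1) h0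
      calc ∫ x in (0:ℝ)..(aSeq 1), |g x| ≤ C 0 * (aSeq 1 - 0) := this
        _ = C 0 * aSeq 1 := by ring
    | succ j ih =>
      have h1 : (0:ℝ) ≤ aSeq (j+1) := (aSeq_pos _).le
      have h2 : aSeq (j+1) ≤ aSeq (j+2) := aSeq_mono (by omega)
      have hadd := intervalIntegral.integral_add_adjacent_intervals
        (hii 0 (aSeq (j+1)) (le_refl 0) h1) (hii (aSeq (j+1)) (aSeq (j+2)) h1 h2)
      have hblk : ∫ x in (aSeq (j+1))..(aSeq (j+2)), |g x| ≤ D * (1/2)^(j+1) := by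
        have := block_integral_bound hg h1 h2 (hb (j+1) (by omega))
        calc ∫ x in (aSeq (j+1))..(aSeq (j+2)), |g x|
            ≤ C (j+1) * (aSeq (j+2) - aSeq (j+1)) := this
          _ ≤ D * (1/2)^(j+1) := hgeo (j+1) (by omega)
      have : ∫ x in (0:ℝ)..(aSeq (j+2)), |g x|
          = (∫ x in (0:ℝ)..(aSeq (j+1)), |g x|) + ∫ x in (aSeq (j+1))..(aSeq (j+2)), |g x| := by
        rw [hadd]
      rw [this]
      have hhalf : D * (1 - (1/2:ℝ)^j) + D * (1/2)^(j+1) = D * (1 - (1/2)^(j+1)) := by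
        ring
      linarith
  have bound : ∀ j : ℕ, ∫ x in (0:ℝ)..(aSeq (j+1)), ‖g x‖ ≤ C 0 * aSeq 1 + D := by
    intro j
    have h1 := key j
    have h2 : D * (1 - (1/2:ℝ)^j) ≤ D := by
      have : (0:ℝ) ≤ (1/2:ℝ)^j := by positivity
      nlinarith
    simp only [Real.norm_eq_abs]
    linarith
  have hIoi : IntegrableOn g (Set.Ioi 0) := by
    apply integrableOn_Ioi_of_intervalIntegral_norm_bounded (C 0 * aSeq 1 + D) 0
      (b := fun j : ℕ => aSeq (j+1)) (l := atTop)
    · intro i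
      have : IntegrableOn g (Set.Icc 0 (aSeq (i+1))) := by
        apply (hg.mono _).integrableOn_compact isCompact_Icc
        intro x hx; exact hx.1
      exact this.mono_set Set.Ioc_subset_Icc_self
    · have h1 : Tendsto (fun j : ℕ => ((j:ℝ)+1)) atTop atTop :=
        tendsto_atTop_add_const_right _ 1 tendsto_natCast_atTop_atTop
      apply tendsto_atTop_mono _ h1
      intro j
      calc ((j:ℝ)+1) = ((j+1 : ℕ) : ℝ) := by push_cast; ring
        _ ≤ aSeq (j+1) := nat_le_aSeq (j+1)
    · exact Filter.Eventually.of_forall bound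
  rwa [integrableOn_Ici_iff_integrableOn_Ioi]

end Integrab

lemma pow_exp_aux1 {n : ℕ} (hn : 1 ≤ n) : (n+1)^2 + n ≤ n^2*3 + 2 := by
  rcases le_or_gt n 2 with h | h
  · interval_cases n <;> norm_num
  · have h5 : 3*n ≤ n*n := Nat.mul_le_mul_right n h
    nlinarith

lemma pow_exp_aux2 (n : ℕ) : (n+1)^2*2 + n ≤ n^2*3 + 8 := by
  rcases le_or_gt n 4 with h | h
  · interval_cases n <;> norm_num
  · have h5 : 5*n ≤ n*n := Nat.mul_le_mul_right n h
    nlinarith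

lemma pow_ratio_le {n : ℕ} (hn : 1 ≤ n) :
    (2:ℝ)^((n+1)^2) / 2^(n^2*3) ≤ 4 * (1/2)^n := by
  rw [div_le_iff₀ (by positivity)]
  have e : (4:ℝ)*(1/2)^n * 2^(n^2*3) = 2^(n^2*3+2)/2^n := by
    rw [one_div, inv_pow, pow_add]; field_simp; ring
  rw [e, le_div_iff₀ (by positivity), ← pow_add]
  apply pow_le_pow_right₀ one_le_two
  exact pow_exp_aux1 hn

lemma pow_ratio_le2 (n : ℕ) :
    (2:ℝ)^((n+1)^2*2) / 2^(n^2*3) ≤ 256 * (1/2)^n := by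
  rw [div_le_iff₀ (by positivity)]
  have e : (256:ℝ)*(1/2)^n * 2^(n^2*3) = 2^(n^2*3+8)/2^n := by
    rw [one_div, inv_pow, pow_add]; field_simp; ring
  rw [e, le_div_iff₀ (by positivity), ← pow_add]
  apply pow_le_pow_right₀ one_le_two
  exact pow_exp_aux2 n

section FInt

variable {f₀ : ℝ → ℝ}

lemma f0_nonneg (hf : PWConstruction f₀) {x : ℝ} (hx : (0:ℝ) ≤ x) : 0 ≤ f₀ x :=
  (hf.2.1 x hx).le

lemma init_bound (hf : PWConstruction f₀) : ∀ x ∈ Set.Icc (0:ℝ) (aSeq 1), |f₀ x| ≤ 1 := by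
  intro x hx
  rw [abs_of_nonneg (f0_nonneg hf hx.1)]
  have h01 : (0:ℝ) < aSeq 1 := aSeq_pos 1
  have hbet := affine_between (f₀ := f₀) hf.2.2.2.2.1 h01 hx
  have e0 : f₀ 0 = 1 := hf.2.2.1
  have e1 : f₀ (aSeq 1) = vS 1 := (f_vals hf le_rfl).1
  have hv1 : vS 1 ≤ 1 := by unfold vS aSeq; norm_num
  calc f₀ x ≤ max (f₀ 0) (f₀ (aSeq 1)) := hbet.2
    _ ≤ 1 := by rw [e0, e1]; exact max_le le_rfl hv1

lemma vS_eq (n : ℕ) : vS n = 2 / 2^(n^2*3) := by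
  unfold vS aSeq
  rw [← pow_mul]

lemma f0_integrableOn (hf : PWConstruction f₀) : IntegrableOn f₀ (Set.Ici 0) := by
  apply integrableOn_of_blockBound hf.1 (C := fun n => if n = 0 then 1 else 3 * vS n)
    (D := 32) (by norm_num)
  · norm_num
  · simpa using init_bound hf
  · intro n hn x hx
    simp only [Nat.pos_iff_ne_zero.mp hn, if_neg (by omega : ¬ n = 0)]
    rw [abs_of_nonneg (f0_nonneg hf (le_trans (aSeq_pos n).le hx.1))]
    exact (block_bounds hf hn hx).2
  · intro n hn
    simp only [if_neg (by omega : ¬ n = 0)]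
    have hv := vS_pos n
    have ha := aSeq_pos n
    have ha' := aSeq_pos (n+1)
    calc 3 * vS n * (aSeq (n+1) - aSeq n) ≤ 3 * vS n * aSeq (n+1) := by nlinarith
      _ = 6 * ((2:ℝ)^((n+1)^2) / 2^(n^2*3)) := by
          rw [vS_eq]; unfold aSeq; field_simp; ring
      _ ≤ 6 * (4 * (1/2)^n) := by
          apply mul_le_mul_of_nonneg_left (pow_ratio_le hn) (by norm_num)
      _ ≤ 32 * (1/2)^n := by
          have : (0:ℝ) ≤ (1/2:ℝ)^n := by positivity
          nlinarith

lemma yf0_integrableOn (hf : PWConstruction f₀) :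
    IntegrableOn (fun y => y * f₀ y) (Set.Ici 0) := by
  apply integrableOn_of_blockBound (g := fun y => y * f₀ y)
    (by exact continuousOn_id.mul hf.1)
    (C := fun n => if n = 0 then 2 else 3 * vS n * aSeq (n+1)) (D := 1536) (by norm_num)
  · norm_num
  · intro x hx
    simp only [if_pos rfl]
    rw [abs_of_nonneg (mul_nonneg hx.1 (f0_nonneg hf hx.1))]
    have h1 := init_bound hf x hx
    rw [abs_of_nonneg (f0_nonneg hf hx.1)] at h1
    have hx2 : x ≤ 2 := by
      have : aSeq 1 = 2 := by unfold aSeq; norm_num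
      linarith [hx.2, this.le.trans (le_refl _)]
    simp only [if_true]
    calc x * f₀ x ≤ 2 * 1 := mul_le_mul hx2 h1 (f0_nonneg hf hx.1) (by norm_num)
      _ = 2 := by norm_num
  · intro n hn x hx
    simp only [if_neg (by omega : ¬ n = 0)]
    have hx0 : (0:ℝ) ≤ x := le_trans (aSeq_pos n).le hx.1
    rw [abs_of_nonneg (mul_nonneg hx0 (f0_nonneg hf hx0))]
    have h1 := (block_bounds hf hn hx).2
    have h2 : x ≤ aSeq (n+1) := hx.2
    have h3 := f0_nonneg hf hx0
    have ha' := aSeq_pos (n+1)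
    calc x * f₀ x ≤ aSeq (n+1) * f₀ x := by nlinarith
      _ ≤ aSeq (n+1) * (3 * vS n) := by nlinarith
      _ = 3 * vS n * aSeq (n+1) := by ring
  · intro n hn
    simp only [if_neg (by omega : ¬ n = 0)]
    have hv := vS_pos n
    have ha := aSeq_pos n
    have ha' := aSeq_pos (n+1)
    calc 3 * vS n * aSeq (n+1) * (aSeq (n+1) - aSeq n)
        ≤ 3 * vS n * aSeq (n+1) * aSeq (n+1) := by nlinarith [mul_pos (mul_pos hv ha') ha]
      _ = 6 * ((2:ℝ)^((n+1)^2*2) / 2^(n^2*3)) := by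
          rw [vS_eq]; unfold aSeq; rw [pow_mul]; field_simp; ring
      _ ≤ 6 * (256 * (1/2)^n) := by
          apply mul_le_mul_of_nonneg_left (pow_ratio_le2 n) (by norm_num)
      _ = 1536 * (1/2)^n := by ring

lemma I_pos (hf : PWConstruction f₀) : 0 < ∫ y in Set.Ici (0:ℝ), f₀ y := by
  have hInt := f0_integrableOn hf
  have hsub : Set.Icc (0:ℝ) 1 ⊆ Set.Ici 0 := fun x hx => hx.1
  have h1 : (0:ℝ) < ∫ y in Set.Icc (0:ℝ) 1, f₀ y := by
    rw [setIntegral_pos_iff_support_of_nonneg_ae]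
    · have hsup : Set.Icc (0:ℝ) 1 ⊆ Function.support f₀ ∩ Set.Icc 0 1 := by
        intro x hx
        exact ⟨ne_of_gt (hf.2.1 x hx.1), hx⟩
      calc (0:ENNReal) < volume (Set.Icc (0:ℝ) 1) := by
            rw [Real.volume_Icc]; norm_num
        _ ≤ volume (Function.support f₀ ∩ Set.Icc (0:ℝ) 1) := measure_mono hsup
    · apply (ae_restrict_iff' measurableSet_Icc).mpr
      exact ae_of_all _ fun x hx => f0_nonneg hf hx.1
    · exact hInt.mono_set hsub
  have h2 : ∫ y in Set.Icc (0:ℝ) 1, f₀ y ≤ ∫ y in Set.Ici (0:ℝ), f₀ y := by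
    apply setIntegral_mono_set hInt
    · apply (ae_restrict_iff' measurableSet_Ici).mpr
      exact ae_of_all _ fun x hx => f0_nonneg hf hx
    · exact HasSubset.Subset.eventuallyLE hsub
  linarith

lemma f0_integrableOn_Ioi (hf : PWConstruction f₀) : IntegrableOn f₀ (Set.Ioi 0) :=
  (f0_integrableOn hf).mono_set Set.Ioi_subset_Ici_self

lemma tendsto_prefix (hf : PWConstruction f₀) :
    Tendsto (fun A => ∫ y in (0:ℝ)..A, f₀ y) atTop (nhds (∫ y in Set.Ici (0:ℝ), f₀ y)) := by
  rw [integral_Ici_eq_integral_Ioi]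
  exact intervalIntegral_tendsto_integral_Ioi 0 (f0_integrableOn_Ioi hf) tendsto_id

lemma interval_le_total {g : ℝ → ℝ} (hInt : IntegrableOn g (Set.Ioi 0))
    (hnn : ∀ y : ℝ, 0 < y → 0 ≤ g y) {p q : ℝ} (hp : 0 ≤ p) (hq : 0 ≤ q) :
    ∫ y in p..q, g y ≤ ∫ y in Set.Ioi (0:ℝ), g y := by
  have hRnn : 0 ≤ ∫ y in Set.Ioi (0:ℝ), g y :=
    setIntegral_nonneg measurableSet_Ioi fun y hy => hnn y hy
  rcases le_total p q with h | h
  · rw [intervalIntegral.integral_of_le h]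
    apply setIntegral_mono_set hInt
    · apply (ae_restrict_iff' measurableSet_Ioi).mpr
      exact ae_of_all _ fun x hx => hnn x hx
    · apply HasSubset.Subset.eventuallyLE
      intro x hx
      exact lt_of_le_of_lt hp hx.1
  · rw [intervalIntegral.integral_of_ge h]
    have : 0 ≤ ∫ y in Set.Ioc q p, g y := by
      apply setIntegral_nonneg measurableSet_Ioc
      intro y hy
      exact hnn y (lt_of_le_of_lt hq hy.1)
    linarith

end FInt

lemma eventually_KS_le {ε : ℝ} (hε : 0 < ε) : ∀ᶠ k in atTop, KS k ≤ ε := by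
  have h : Tendsto (fun k : ℕ => 36 * (1/2:ℝ)^k) atTop (nhds (36 * 0)) :=
    (tendsto_pow_atTop_nhds_zero_of_lt_one (by norm_num) (by norm_num)).const_mul 36
  rw [mul_zero] at h
  have h1 : ∀ᶠ k : ℕ in atTop, 36 * (1/2:ℝ)^k < ε := h.eventually_lt_const hε
  filter_upwards [h1, eventually_ge_atTop 63] with k hk1 hk2
  exact (KS_le_geom hk2).trans hk1.le


section Main

variable {f₀ : ℝ → ℝ}

lemma locate {N : ℕ} {x : ℝ} (hx : aSeq (N+3) ≤ x) :
    ∃ k, N + 1 ≤ k ∧ 1 ≤ k ∧ x ∈ Set.Icc (aSeq (k+1)) (aSeq (k+2)) := by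
  have h1 : aSeq 1 ≤ x := le_trans (aSeq_mono (by omega)) hx
  obtain ⟨n, hn1, hnx, hnx'⟩ := exists_block h1
  have hN : N + 3 ≤ n + 1 := by
    by_contra h
    push_neg at h
    have : aSeq (n+1) < aSeq (N+3) := aSeq_strictMono h
    linarith
  obtain ⟨k, rfl⟩ : ∃ k, n = k + 1 := ⟨n - 1, by omega⟩
  refine ⟨k, ?_, ?_, hnx, hnx'⟩ <;> omega

lemma f0_ratio_tendsto (hf : PWConstruction f₀) (t : ℝ) :
    Tendsto (fun x => f₀ (x + t) / f₀ x) atTop (nhds 1) := by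
  rw [Metric.tendsto_atTop]
  intro ε hε
  have hδ : 0 < ε / (|t| + 1) := by positivity
  obtain ⟨k₀, hk₀⟩ := (eventually_KS_le hδ).exists_forall_of_atTop
  refine ⟨aSeq (k₀ + ⌈|t|⌉₊ + 3), fun x hx => ?_⟩
  obtain ⟨k, hkN, hk1, hxk⟩ := locate hx
  have hkk₀ : k₀ ≤ k := by omega
  have htk : |t| ≤ aSeq k := by
    calc |t| ≤ (⌈|t|⌉₊ : ℝ) := Nat.le_ceil _
      _ ≤ (k : ℝ) := by exact_mod_cast (by omega : ⌈|t|⌉₊ ≤ k)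
      _ ≤ aSeq k := nat_le_aSeq k
  have h2k := two_mul_aSeq_le k
  have h2k2 := two_mul_aSeq_le (k+2)
  have hak := aSeq_pos k
  have hak2 := aSeq_pos (k+2)
  have hz : x + t ∈ Set.Icc (aSeq k) (aSeq (k+3)) := by
    constructor
    · have : -|t| ≤ t := neg_abs_le t
      have := hxk.1
      nlinarith
    · have : t ≤ |t| := le_abs_self t
      have h3 : aSeq k ≤ aSeq (k+2) := aSeq_mono (by omega)
      have := hxk.2
      nlinarith
  have hrb := ratio_bound hf hk1 hxk hz
  rw [Real.dist_eq]
  have : |x - (x + t)| = |t| := by rw [show x - (x+t) = -t by ring, abs_neg]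
  rw [this] at hrb
  calc |f₀ (x+t)/f₀ x - 1| ≤ KS k * |t| := hrb
    _ ≤ (ε/(|t|+1)) * |t| := by
        apply mul_le_mul_of_nonneg_right (hk₀ k hkk₀) (abs_nonneg t)
    _ < ε := by
        rw [div_mul_eq_mul_div, div_lt_iff₀ (by positivity)]
        nlinarith [abs_nonneg t]

lemma normExt_eq (hf : PWConstruction f₀) {x : ℝ} (hx : 0 ≤ x) :
    normExt f₀ x = f₀ x / ∫ y in Set.Ici (0:ℝ), f₀ y := by
  unfold normExt
  rw [if_neg (not_lt.mpr hx)]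

lemma longTailed (hf : PWConstruction f₀) : LongTailedDensity (normExt f₀) := by
  have hI := I_pos hf
  constructor
  · filter_upwards [eventually_ge_atTop (0:ℝ)] with x hx
    rw [normExt_eq hf hx]
    exact div_pos (hf.2.1 x hx) hI
  · intro t
    apply (f0_ratio_tendsto hf t).congr'
    filter_upwards [eventually_ge_atTop (max 0 (-t))] with x hx
    have hx0 : 0 ≤ x := le_trans (le_max_left _ _) hx
    have hxt : 0 ≤ x + t := by
      have := le_trans (le_max_right _ _) hx
      linarith
    rw [normExt_eq hf hxt, normExt_eq hf hx0,
      div_div_div_cancel_right₀ (ne_of_gt hI)]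

/-- Continuity of the convolution integrand. -/
lemma conv_cont (hf : PWConstruction f₀) {x : ℝ} (hx : 0 ≤ x) :
    ContinuousOn (fun y => f₀ (x - y) * f₀ y) (Set.Icc 0 x) := by
  apply ContinuousOn.mul
  · apply hf.1.comp ((continuous_const.sub continuous_id).continuousOn)
    intro y hy
    simp only [Set.mem_Ici, id_eq, Pi.sub_apply]
    simp only [Set.mem_Icc] at hy
    linarith [hy.2]
  · exact hf.1.mono (fun y hy => hy.1)

lemma conv_intInt (hf : PWConstruction f₀) {x p q : ℝ} (hx : 0 ≤ x)
    (hp : p ∈ Set.Icc 0 x) (hq : q ∈ Set.Icc 0 x) :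
    IntervalIntegrable (fun y => f₀ (x - y) * f₀ y) volume p q := by
  apply ((conv_cont hf hx).mono _).intervalIntegrable
  intro y hy
  rcases le_total p q with h | h
  · rw [Set.uIcc_of_le h] at hy
    exact ⟨le_trans hp.1 hy.1, le_trans hy.2 hq.2⟩
  · rw [Set.uIcc_of_ge h] at hy
    exact ⟨le_trans hq.1 hy.1, le_trans hy.2 hp.2⟩

lemma f0_intInt (hf : PWConstruction f₀) {p q : ℝ} (hp : 0 ≤ p) (hq : 0 ≤ q) :
    IntervalIntegrable f₀ volume p q := by
  apply (hf.1.mono _).intervalIntegrable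
  intro y hy
  rcases le_total p q with h | h
  · rw [Set.uIcc_of_le h] at hy; exact le_trans hp hy.1
  · rw [Set.uIcc_of_ge h] at hy; exact le_trans hq hy.1

/-- symmetry: `G x = 2 * H x`. -/
lemma conv_symm (hf : PWConstruction f₀) {x : ℝ} (hx : 0 ≤ x) :
    ∫ y in (0:ℝ)..x, f₀ (x - y) * f₀ y
      = 2 * ∫ y in (0:ℝ)..(x/2), f₀ (x - y) * f₀ y := by
  have h1 : (0:ℝ) ≤ x/2 := by linarith
  have h2 : x/2 ≤ x := by linarith
  have i1 := conv_intInt hf hx (Set.mem_Icc.mpr ⟨le_refl 0, hx⟩)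
    (Set.mem_Icc.mpr ⟨h1, h2⟩)
  have i2 := conv_intInt hf hx (Set.mem_Icc.mpr ⟨h1, h2⟩)
    (Set.mem_Icc.mpr ⟨hx, le_refl x⟩)
  have hadd := intervalIntegral.integral_add_adjacent_intervals i1 i2
  have hsub : ∫ y in (x/2)..x, f₀ (x - y) * f₀ y
      = ∫ y in (0:ℝ)..(x/2), f₀ (x - y) * f₀ y := by
    have e1 : ∫ y in (x/2)..x, f₀ (x - y) * f₀ y
        = ∫ y in (x/2)..x, (fun u => f₀ u * f₀ (x - u)) (x - y) := by
      apply intervalIntegral.integral_congr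
      intro y hy
      simp only [sub_sub_cancel]
    rw [e1, intervalIntegral.integral_comp_sub_left (fun u => f₀ u * f₀ (x - u)) x]
    rw [show x - x = 0 by ring, show x - x/2 = x/2 by ring]
    exact intervalIntegral.integral_congr fun y hy => mul_comm _ _
  rw [← hadd, hsub]
  ring


lemma yf0_intInt (hf : PWConstruction f₀) {p q : ℝ} (hp : 0 ≤ p) (hq : 0 ≤ q) :
    IntervalIntegrable (fun y => y * f₀ y) volume p q := by
  have hcont : ContinuousOn (fun y : ℝ => y * f₀ y) (Set.Ici 0) :=
    continuousOn_id.mul hf.1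
  apply (hcont.mono _).intervalIntegrable
  intro y hy
  rcases le_total p q with h | h
  · rw [Set.uIcc_of_le h] at hy; exact le_trans hp hy.1
  · rw [Set.uIcc_of_ge h] at hy; exact le_trans hq hy.1

set_option maxHeartbeats 1000000 in
lemma conv_main (hf : PWConstruction f₀) :
    Tendsto (fun x => (∫ y in (0:ℝ)..(x/2), f₀ (x - y) * f₀ y) / f₀ x) atTop
      (nhds (∫ y in Set.Ici (0:ℝ), f₀ y)) := by
  have hI := I_pos hf
  have hIoi : (∫ y in Set.Ioi (0:ℝ), f₀ y) = ∫ y in Set.Ici (0:ℝ), f₀ y := by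
    rw [MeasureTheory.integral_Ici_eq_integral_Ioi]
  set I := ∫ y in Set.Ici (0:ℝ), f₀ y with hIdef
  set M₁ := ∫ y in Set.Ioi (0:ℝ), (y * f₀ y) with hM₁def
  have hM₁nn : 0 ≤ M₁ := setIntegral_nonneg measurableSet_Ioi
    (fun y hy => mul_nonneg (le_of_lt hy) (f0_nonneg hf (le_of_lt hy)))
  have hyInt : IntegrableOn (fun y => y * f₀ y) (Set.Ioi 0) :=
    (yf0_integrableOn hf).mono_set Set.Ioi_subset_Ici_self
  have hfInt : IntegrableOn f₀ (Set.Ioi 0) := f0_integrableOn_Ioi hf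
  rw [Metric.tendsto_atTop]
  intro ε hε
  set ε' := ε/5 with hε'def
  have hε' : 0 < ε' := by positivity
  obtain ⟨A₀, hA₀⟩ := (Metric.tendsto_atTop.mp (tendsto_prefix hf)) ε' hε'
  set A := max A₀ 1 with hAdef
  have hA1 : (1:ℝ) ≤ A := le_max_right _ _
  have hA0 : (0:ℝ) ≤ A := by linarith
  set S := ∫ y in (0:ℝ)..A, f₀ y with hSdef
  have hA2 : |S - I| ≤ ε' := by
    have := hA₀ A (le_max_left _ _)
    rw [Real.dist_eq] at this
    exact this.le
  have hSle : S ≤ I := by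
    rw [hSdef, ← hIoi]
    exact interval_le_total hfInt (fun y hy => f0_nonneg hf hy.le) le_rfl hA0
  have hS0 : 0 ≤ S :=
    intervalIntegral.integral_nonneg hA0 (fun y hy => f0_nonneg hf hy.1)
  set δ := ε' / (A * I + M₁ + 1) with hδdef
  have hden : (0:ℝ) < A * I + M₁ + 1 := by nlinarith
  have hδ : 0 < δ := div_pos hε' hden
  obtain ⟨k₀, hk₀⟩ := (eventually_KS_le hδ).exists_forall_of_atTop
  refine ⟨aSeq (k₀ + ⌈2*A⌉₊ + 3), fun x hx => ?_⟩
  obtain ⟨k, hkN, hk1, hxk⟩ := locate hx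
  have hKk : KS k ≤ δ := hk₀ k (by omega)
  have hKpos := KS_pos k
  have h2A : 2*A ≤ aSeq k := by
    calc 2*A ≤ (⌈2*A⌉₊:ℝ) := Nat.le_ceil _
      _ ≤ (k:ℝ) := by exact_mod_cast (by omega : ⌈2*A⌉₊ ≤ k)
      _ ≤ aSeq k := nat_le_aSeq k
  have h2k := two_mul_aSeq_le k
  have h2k1 := two_mul_aSeq_le (k+1)
  have hak := aSeq_pos k
  have hx1 : aSeq (k+1) ≤ x := hxk.1
  have hx2 : x ≤ aSeq (k+2) := hxk.2
  have hx4A : 4*A ≤ x := by nlinarith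
  have hx0 : (0:ℝ) ≤ x := by linarith
  have hfx : 0 < f₀ x := hf.2.1 x hx0
  have hAx2 : A ≤ x/2 := by nlinarith
  have hx2x : x/2 ≤ x := by nlinarith
  -- ratio facts
  have r1 : ∀ y ∈ Set.Icc (0:ℝ) A, |f₀ (x - y) / f₀ x - 1| ≤ KS k * A := by
    intro y hy
    have hz : x - y ∈ Set.Icc (aSeq k) (aSeq (k+3)) := by
      constructor
      · nlinarith [hy.2]
      · have h3 : aSeq (k+2) ≤ aSeq (k+3) := aSeq_mono (by omega)
        nlinarith [hy.1]
    have hrb := ratio_bound hf hk1 hxk hz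
    calc |f₀ (x-y)/f₀ x - 1| ≤ KS k * |x - (x - y)| := hrb
      _ = KS k * y := by rw [show x - (x-y) = y by ring, abs_of_nonneg hy.1]
      _ ≤ KS k * A := mul_le_mul_of_nonneg_left hy.2 hKpos.le
  have r2 : ∀ y ∈ Set.Icc A (x/2), f₀ (x - y) / f₀ x ≤ 1 + KS k * y := by
    intro y hy
    have hy0 : (0:ℝ) ≤ y := by linarith [hy.1]
    have hz : x - y ∈ Set.Icc (aSeq k) (aSeq (k+3)) := by
      constructor
      · nlinarith [hy.2]
      · have h3 : aSeq (k+2) ≤ aSeq (k+3) := aSeq_mono (by omega)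
        nlinarith [hy.1]
    have hrb := ratio_bound hf hk1 hxk hz
    have h1 : f₀ (x-y)/f₀ x - 1 ≤ KS k * y := by
      calc f₀ (x-y)/f₀ x - 1 ≤ |f₀ (x-y)/f₀ x - 1| := le_abs_self _
        _ ≤ KS k * |x - (x-y)| := hrb
        _ = KS k * y := by rw [show x - (x-y) = y by ring, abs_of_nonneg hy0]
    linarith
  -- integrability pieces
  have memA : A ∈ Set.Icc (0:ℝ) x := ⟨hA0, by linarith⟩
  have mem0 : (0:ℝ) ∈ Set.Icc (0:ℝ) x := ⟨le_refl _, hx0⟩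
  have memx2 : x/2 ∈ Set.Icc (0:ℝ) x := ⟨by linarith, hx2x⟩
  have i0A := conv_intInt hf hx0 mem0 memA
  have iAx2 := conv_intInt hf hx0 memA memx2
  have hsplit := intervalIntegral.integral_add_adjacent_intervals i0A iAx2
  have if0A := f0_intInt hf le_rfl hA0
  have if0Ax2 := f0_intInt hf hA0 (by linarith : (0:ℝ) ≤ x/2)
  -- T1 estimate
  have est1 : |(∫ y in (0:ℝ)..A, f₀ (x - y) * f₀ y) / f₀ x - S| ≤ ε' := by
    have hdiv : (∫ y in (0:ℝ)..A, f₀ (x - y) * f₀ y) / f₀ x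
        = ∫ y in (0:ℝ)..A, f₀ (x - y) * f₀ y / f₀ x :=
      (intervalIntegral.integral_div _ _).symm
    have hsub : (∫ y in (0:ℝ)..A, f₀ (x-y) * f₀ y / f₀ x) - S
        = ∫ y in (0:ℝ)..A, (f₀ (x-y) * f₀ y / f₀ x - f₀ y) :=
      (intervalIntegral.integral_sub (i0A.div_const _) if0A).symm
    rw [hdiv, hsub]
    have hptw : ∀ y ∈ Set.Icc (0:ℝ) A, |f₀ (x-y)*f₀ y/f₀ x - f₀ y| ≤ KS k * A * f₀ y := by
      intro y hy
      have he : f₀ (x-y)*f₀ y/f₀ x - f₀ y = (f₀ (x-y)/f₀ x - 1) * f₀ y := by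
        field_simp
      rw [he, abs_mul, abs_of_nonneg (f0_nonneg hf hy.1)]
      exact mul_le_mul_of_nonneg_right (r1 y hy) (f0_nonneg hf hy.1)
    have hint1 : IntervalIntegrable (fun y => |f₀ (x-y)*f₀ y/f₀ x - f₀ y|) volume 0 A :=
      ((i0A.div_const _).sub if0A).abs
    have hint2 : IntervalIntegrable (fun y => KS k * A * f₀ y) volume 0 A :=
      if0A.const_mul _
    have hmono := intervalIntegral.integral_mono_on hA0 hint1 hint2 hptw
    have hconst : (∫ y in (0:ℝ)..A, KS k * A * f₀ y) = KS k * A * S :=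
      intervalIntegral.integral_const_mul _ _
    have hb1 : KS k * A ≤ δ * A := mul_le_mul_of_nonneg_right hKk hA0
    have hb2 : KS k * A * S ≤ δ * A * S :=
      mul_le_mul_of_nonneg_right hb1 hS0
    have hb3 : δ * A * S ≤ δ * A * I :=
      mul_le_mul_of_nonneg_left hSle (by positivity)
    have hδAI : δ * A * I ≤ ε' := by
      rw [hδdef, div_mul_eq_mul_div, div_mul_eq_mul_div, div_le_iff₀ hden]
      nlinarith
    calc |∫ y in (0:ℝ)..A, (f₀ (x-y) * f₀ y / f₀ x - f₀ y)|
        ≤ ∫ y in (0:ℝ)..A, |f₀ (x-y) * f₀ y / f₀ x - f₀ y| :=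
          intervalIntegral.abs_integral_le_integral_abs hA0
      _ ≤ ∫ y in (0:ℝ)..A, KS k * A * f₀ y := hmono
      _ = KS k * A * S := hconst
      _ ≤ ε' := by linarith
  -- T2 estimate
  have T2nn : 0 ≤ ∫ y in A..(x/2), f₀ (x-y)*f₀ y := by
    apply intervalIntegral.integral_nonneg hAx2
    intro y hy
    exact mul_nonneg (f0_nonneg hf (by linarith [hy.2] : (0:ℝ) ≤ x - y))
      (f0_nonneg hf (by linarith [hy.1] : (0:ℝ) ≤ y))
  have iyAx2 := yf0_intInt hf hA0 (by linarith : (0:ℝ) ≤ x/2)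
  have est2 : (∫ y in A..(x/2), f₀ (x-y)*f₀ y)/f₀ x ≤ 2*ε' := by
    have hdiv : (∫ y in A..(x/2), f₀ (x - y) * f₀ y) / f₀ x
        = ∫ y in A..(x/2), f₀ (x - y) * f₀ y / f₀ x :=
      (intervalIntegral.integral_div _ _).symm
    have hptw : ∀ y ∈ Set.Icc A (x/2), f₀ (x-y)*f₀ y/f₀ x ≤ f₀ y + KS k * (y * f₀ y) := by
      intro y hy
      have hy0 : (0:ℝ) ≤ y := by linarith [hy.1]
      have he : f₀ (x-y)*f₀ y/f₀ x = (f₀ (x-y)/f₀ x) * f₀ y := by ring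
      rw [he]
      calc (f₀ (x-y)/f₀ x) * f₀ y ≤ (1 + KS k * y) * f₀ y :=
            mul_le_mul_of_nonneg_right (r2 y hy) (f0_nonneg hf hy0)
        _ = f₀ y + KS k * (y * f₀ y) := by ring
    have hint2 : IntervalIntegrable (fun y => f₀ y + KS k * (y * f₀ y)) volume A (x/2) :=
      if0Ax2.add (iyAx2.const_mul _)
    have hmono := intervalIntegral.integral_mono_on hAx2 (iAx2.div_const _) hint2 hptw
    have hsplit2 : (∫ y in A..(x/2), (f₀ y + KS k * (y*f₀ y)))
        = (∫ y in A..(x/2), f₀ y) + KS k * ∫ y in A..(x/2), (y*f₀ y) := by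
      rw [intervalIntegral.integral_add if0Ax2 (iyAx2.const_mul _),
        intervalIntegral.integral_const_mul]
    have htail : (∫ y in A..(x/2), f₀ y) ≤ ε' := by
      have hadd := intervalIntegral.integral_add_adjacent_intervals if0A if0Ax2
      have hx2I : (∫ y in (0:ℝ)..(x/2), f₀ y) ≤ I := by
        rw [← hIoi]
        exact interval_le_total hfInt (fun y hy => f0_nonneg hf hy.le) le_rfl (by linarith)
      have hAlow : I - ε' ≤ S := by
        have := abs_le.mp hA2
        linarith [this.1]
      linarith [hadd]
    have hyM : (∫ y in A..(x/2), (y*f₀ y)) ≤ M₁ := by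
      rw [hM₁def]
      exact interval_le_total hyInt
        (fun y hy => mul_nonneg hy.le (f0_nonneg hf hy.le)) hA0 (by linarith)
    have hynn : 0 ≤ ∫ y in A..(x/2), (y*f₀ y) := by
      apply intervalIntegral.integral_nonneg hAx2
      intro y hy
      exact mul_nonneg (by linarith [hy.1]) (f0_nonneg hf (by linarith [hy.1]))
    have hKM : KS k * (∫ y in A..(x/2), (y*f₀ y)) ≤ ε' := by
      have h1 : KS k * (∫ y in A..(x/2), (y*f₀ y)) ≤ δ * M₁ :=
        mul_le_mul hKk hyM hynn hδ.le
      have h2 : δ * M₁ ≤ ε' := by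
        rw [hδdef, div_mul_eq_mul_div, div_le_iff₀ hden]
        nlinarith [mul_pos (lt_of_lt_of_le one_pos hA1) hI]
      linarith
    calc (∫ y in A..(x/2), f₀ (x-y)*f₀ y)/f₀ x
        = ∫ y in A..(x/2), f₀ (x - y) * f₀ y / f₀ x := hdiv
      _ ≤ ∫ y in A..(x/2), (f₀ y + KS k * (y*f₀ y)) := hmono
      _ = (∫ y in A..(x/2), f₀ y) + KS k * ∫ y in A..(x/2), (y*f₀ y) := hsplit2
      _ ≤ 2*ε' := by linarith
  -- combine
  rw [Real.dist_eq]
  have hsum : (∫ y in (0:ℝ)..(x/2), f₀ (x-y)*f₀ y)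
      = (∫ y in (0:ℝ)..A, f₀ (x-y)*f₀ y) + ∫ y in A..(x/2), f₀ (x-y)*f₀ y := hsplit.symm
  rw [hsum, add_div]
  set u := (∫ y in (0:ℝ)..A, f₀ (x-y)*f₀ y)/f₀ x with hu
  set w := (∫ y in A..(x/2), f₀ (x-y)*f₀ y)/f₀ x with hw
  have hrw : u + w - I = (u - S) + (S - I) + w := by ring
  rw [hrw]
  have h3 : |(u - S) + (S - I) + w| ≤ |u - S| + |S - I| + |w| := by
    calc |(u - S) + (S - I) + w| ≤ |(u-S)+(S-I)| + |w| := abs_add_le _ _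
      _ ≤ |u-S| + |S-I| + |w| := by linarith [abs_add_le (u-S) (S-I)]
  have hwb : |w| ≤ 2*ε' := by
    rw [hw, abs_of_nonneg (div_nonneg T2nn hfx.le)]
    exact est2
  have : |(u - S) + (S - I) + w| ≤ 4*ε' := by linarith
  have h5 : ε = 5*ε' := by rw [hε'def]; ring
  linarith

end Main

end PWProof

theorem pw_density_subexponential (f₀ : ℝ → ℝ) (hf₀ : PWConstruction f₀) :
    SubexpDensity (normExt f₀) := by
  open PWProof in
  refine ⟨PWProof.longTailed hf₀, ?_⟩
  have hI := PWProof.I_pos hf₀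
  have hmain := PWProof.conv_main hf₀
  have h2 : Tendsto (fun x => 2 * ((∫ y in (0:ℝ)..(x/2), f₀ (x - y) * f₀ y) / f₀ x)
        / ∫ y in Set.Ici (0:ℝ), f₀ y)
      atTop (nhds (2 * (∫ y in Set.Ici (0:ℝ), f₀ y) / ∫ y in Set.Ici (0:ℝ), f₀ y)) :=
    (hmain.const_mul 2).div_const _
  rw [show 2 * (∫ y in Set.Ici (0:ℝ), f₀ y) / ∫ y in Set.Ici (0:ℝ), f₀ y = 2 by
    field_simp] at h2
  apply Tendsto.congr' _ h2
  filter_upwards [eventually_ge_atTop (0:ℝ)] with x hx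
  have hfx := hf₀.2.1 x hx
  have e1 : (∫ y in (0:ℝ)..x, normExt f₀ (x - y) * normExt f₀ y)
      = (∫ y in (0:ℝ)..x, f₀ (x - y) * f₀ y)
        / ((∫ y in Set.Ici (0:ℝ), f₀ y) * ∫ y in Set.Ici (0:ℝ), f₀ y) := by
    rw [← intervalIntegral.integral_div]
    apply intervalIntegral.integral_congr
    intro y hy
    rw [Set.uIcc_of_le hx] at hy
    show normExt f₀ (x - y) * normExt f₀ y
        = f₀ (x - y) * f₀ y / ((∫ y in Set.Ici (0:ℝ), f₀ y) * ∫ y in Set.Ici (0:ℝ), f₀ y)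
    rw [PWProof.normExt_eq hf₀ (by linarith [hy.2] : (0:ℝ) ≤ x - y),
      PWProof.normExt_eq hf₀ hy.1, div_mul_div_comm]
  rw [e1, PWProof.normExt_eq hf₀ hx, PWProof.conv_symm hf₀ hx]
  field_simp
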